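/- Let m ≥ n and suppose σ_n(M A) > ‖M B‖₂ for some nonsingular M. Then any two solutions x₁, x₂ of A x − B|x| = b are equal. -/

import Mathlib

open Matrix

/-- The `i`-th largest singular value of a real matrix (0-indexed),
defined as the `i`-th entry of the decreasingly sorted list of square roots
of the eigenvalues of `Aᴴ * A`; `0` if `i` is out of range. -/
noncomputable def sv {m n : ℕ} (A : Matrix (Fin m) (Fin n) ℝ) (i : ℕ) : ℝ :=
  ((List.ofFn fun j : Fin n =>
      Real.sqrt ((Matrix.isHermitian_conjTranspose_mul_self A).eigenvalues j)).insertionSort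
    (· ≥ ·)).getD i 0

/-- Euclidean norm of a vector. -/
noncomputable def vnorm {n : ℕ} (x : Fin n → ℝ) : ℝ := Real.sqrt (∑ i, x i ^ 2)

lemma aux_getD_zero_ge {l : List ℝ} (hs : l.Pairwise (· ≥ ·)) {a : ℝ} (ha : a ∈ l) :
    a ≤ l.getD 0 0 := by
  cases l with
  | nil => simp at ha
  | cons b t =>
    rcases List.mem_cons.mp ha with h | h
    · simp [h]
    · simpa using (List.pairwise_cons.mp hs).1 a h

lemma aux_getD_last_le {l : List ℝ} (hs : l.Pairwise (· ≥ ·)) {a : ℝ} (ha : a ∈ l) :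
    l.getD (l.length - 1) 0 ≤ a := by
  obtain ⟨i, rfl⟩ := List.mem_iff_get.mp ha
  have hl : 0 < l.length := i.pos
  have hlt : l.length - 1 < l.length := Nat.sub_lt hl one_pos
  rw [List.getD_eq_getElem l 0 hlt]
  exact hs.rel_get_of_le (show i ≤ (⟨l.length - 1, hlt⟩ : Fin l.length) by
    simp only [Fin.le_def, Fin.val_mk]; omega)

lemma aux_sv_nonneg {m n : ℕ} (C : Matrix (Fin m) (Fin n) ℝ) (i : ℕ) : 0 ≤ sv C i := by
  unfold sv
  set l := ((List.ofFn fun j : Fin n =>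
      Real.sqrt ((Matrix.isHermitian_conjTranspose_mul_self C).eigenvalues j)).insertionSort
    (· ≥ ·)) with hl
  have hpos : ∀ a ∈ l, (0 : ℝ) ≤ a := by
    intro a ha
    rw [hl, (List.perm_insertionSort (· ≥ ·) _).mem_iff, List.mem_ofFn] at ha
    obtain ⟨j, hj⟩ := ha
    rw [← hj]
    exact Real.sqrt_nonneg _
  by_cases hi : i < l.length
  · rw [List.getD_eq_getElem l 0 hi]
    exact hpos _ (List.getElem_mem hi)
  · rw [List.getD_eq_default l 0 (not_lt.mp hi)]

lemma aux_sv_mem_bounds {m n : ℕ} (C : Matrix (Fin m) (Fin n) ℝ) (j : Fin n) :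
    sv C (n - 1) ≤ Real.sqrt ((Matrix.isHermitian_conjTranspose_mul_self C).eigenvalues j) ∧
    Real.sqrt ((Matrix.isHermitian_conjTranspose_mul_self C).eigenvalues j) ≤ sv C 0 := by
  set l := ((List.ofFn fun j : Fin n =>
      Real.sqrt ((Matrix.isHermitian_conjTranspose_mul_self C).eigenvalues j)).insertionSort
    (· ≥ ·)) with hl
  have hs : l.Pairwise (· ≥ ·) := List.pairwise_insertionSort _ _
  have hmem : Real.sqrt ((Matrix.isHermitian_conjTranspose_mul_self C).eigenvalues j) ∈ l := by
    rw [hl, (List.perm_insertionSort (· ≥ ·) _).mem_iff, List.mem_ofFn]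
    exact ⟨j, rfl⟩
  have hlen : l.length = n := by
    rw [hl, List.length_insertionSort, List.length_ofFn]
  constructor
  · have := aux_getD_last_le hs hmem
    rwa [hlen] at this
  · exact aux_getD_zero_ge hs hmem

/-- Spectral decomposition of the quadratic form `‖C x‖²`. -/
lemma aux_quad {m n : ℕ} (C : Matrix (Fin m) (Fin n) ℝ) (x : Fin n → ℝ) :
    ∃ c : Fin n → ℝ, (∑ j, c j ^ 2 = ∑ i, x i ^ 2) ∧
      ∑ i, (C.mulVec x i) ^ 2 =
        ∑ j, (Matrix.isHermitian_conjTranspose_mul_self C).eigenvalues j * c j ^ 2 := by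
  classical
  set hG := Matrix.isHermitian_conjTranspose_mul_self C
  set U : Matrix (Fin n) (Fin n) ℝ := (hG.eigenvectorUnitary : Matrix (Fin n) (Fin n) ℝ) with hU
  have hUU : star U * U = 1 := Unitary.star_mul_self_of_mem hG.eigenvectorUnitary.2
  have hUU' : U * star U = 1 := Unitary.mul_star_self_of_mem hG.eigenvectorUnitary.2
  have hstar : star U *ᵥ x = x ᵥ* U := by
    rw [Matrix.star_eq_conjTranspose, Matrix.conjTranspose_eq_transpose_of_trivial,
      Matrix.mulVec_transpose]
  refine ⟨(star U).mulVec x, ?_, ?_⟩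
  · have hv : ∀ v : Fin n → ℝ, ∑ j, v j ^ 2 = v ⬝ᵥ v := by
      intro v; simp [dotProduct, pow_two]
    rw [hv, hv]
    calc (star U *ᵥ x) ⬝ᵥ (star U *ᵥ x)
        = (x ᵥ* U) ⬝ᵥ (star U *ᵥ x) := by rw [hstar]
      _ = x ⬝ᵥ (U *ᵥ (star U *ᵥ x)) := (Matrix.dotProduct_mulVec _ _ _).symm
      _ = x ⬝ᵥ x := by rw [Matrix.mulVec_mulVec, hUU', Matrix.one_mulVec]
  · have h1 : ∑ i, (C.mulVec x i) ^ 2 = x ⬝ᵥ (Cᴴ * C).mulVec x := by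
      rw [← Matrix.mulVec_mulVec, Matrix.dotProduct_mulVec x Cᴴ,
        Matrix.conjTranspose_eq_transpose_of_trivial, Matrix.vecMul_transpose]
      simp [dotProduct, pow_two]
    have hspec : Cᴴ * C = U * Matrix.diagonal (RCLike.ofReal ∘ hG.eigenvalues) * star U :=
      hG.spectral_theorem
    rw [h1]
    conv_lhs => rw [hspec]
    rw [← Matrix.mulVec_mulVec, ← Matrix.mulVec_mulVec, Matrix.dotProduct_mulVec x U, ← hstar]
    simp only [dotProduct, Matrix.mulVec_diagonal, Function.comp_apply]
    refine Finset.sum_congr rfl fun j _ => ?_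
    have : (RCLike.ofReal (hG.eigenvalues j) : ℝ) = hG.eigenvalues j := rfl
    rw [this]; ring

lemma aux_low {m n : ℕ} (C : Matrix (Fin m) (Fin n) ℝ) (x : Fin n → ℝ) :
    sv C (n - 1) ^ 2 * ∑ i, x i ^ 2 ≤ ∑ i, (C.mulVec x i) ^ 2 := by
  obtain ⟨c, hc1, hc2⟩ := aux_quad C x
  rw [hc2, ← hc1, Finset.mul_sum]
  refine Finset.sum_le_sum fun j _ => ?_
  have hb := (aux_sv_mem_bounds C j).1
  have hnn := aux_sv_nonneg C (n - 1)
  have : sv C (n - 1) ^ 2 ≤ (Matrix.isHermitian_conjTranspose_mul_self C).eigenvalues j := by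
    have := mul_self_le_mul_self hnn hb
    calc sv C (n - 1) ^ 2 = sv C (n-1) * sv C (n-1) := pow_two _
      _ ≤ Real.sqrt _ * Real.sqrt _ := this
      _ = _ := Real.mul_self_sqrt
          ((Matrix.PosSemidef.eigenvalues_nonneg (Matrix.posSemidef_conjTranspose_mul_self C)) j)
  exact mul_le_mul_of_nonneg_right this (sq_nonneg _)

lemma aux_up {m n : ℕ} (C : Matrix (Fin m) (Fin n) ℝ) (x : Fin n → ℝ) :
    ∑ i, (C.mulVec x i) ^ 2 ≤ sv C 0 ^ 2 * ∑ i, x i ^ 2 := by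
  obtain ⟨c, hc1, hc2⟩ := aux_quad C x
  rw [hc2, ← hc1, Finset.mul_sum]
  refine Finset.sum_le_sum fun j _ => ?_
  have hb := (aux_sv_mem_bounds C j).2
  have : (Matrix.isHermitian_conjTranspose_mul_self C).eigenvalues j ≤ sv C 0 ^ 2 := by
    have hnn := Real.sqrt_nonneg ((Matrix.isHermitian_conjTranspose_mul_self C).eigenvalues j)
    calc (Matrix.isHermitian_conjTranspose_mul_self C).eigenvalues j
        = Real.sqrt _ * Real.sqrt _ := (Real.mul_self_sqrt
          ((Matrix.PosSemidef.eigenvalues_nonneg (Matrix.posSemidef_conjTranspose_mul_self C)) j)).symm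
      _ ≤ sv C 0 * sv C 0 := mul_self_le_mul_self hnn hb
      _ = sv C 0 ^ 2 := (pow_two _).symm
  exact mul_le_mul_of_nonneg_right this (sq_nonneg _)

/-- If `m ≥ n` and `σ_n(M A) > ‖M B‖₂` for some nonsingular `M`, then any two solutions of
`A x − B|x| = b` coincide. -/
theorem gave_solutions_eq {m n : ℕ} (hmn : n ≤ m) (A B : Matrix (Fin m) (Fin n) ℝ)
    (M : Matrix (Fin m) (Fin m) ℝ) (hM : IsUnit M)
    (h : sv (M * A) (n - 1) > sv (M * B) 0) (b : Fin m → ℝ) (x₁ x₂ : Fin n → ℝ)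
    (h₁ : A.mulVec x₁ - B.mulVec (fun j => |x₁ j|) = b)
    (h₂ : A.mulVec x₂ - B.mulVec (fun j => |x₂ j|) = b) : x₁ = x₂ := by
  set X : Fin n → ℝ := x₁ - x₂ with hX
  set Y : Fin n → ℝ := (fun j => |x₁ j|) - (fun j => |x₂ j|) with hY
  have hAB : A.mulVec X = B.mulVec Y := by
    rw [hX, hY, Matrix.mulVec_sub, Matrix.mulVec_sub]
    exact sub_eq_sub_iff_sub_eq_sub.mp (h₁.trans h₂.symm)
  have hMAB : (M * A).mulVec X = (M * B).mulVec Y := by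
    rw [← Matrix.mulVec_mulVec, ← Matrix.mulVec_mulVec, hAB]
  have key : sv (M * A) (n - 1) ^ 2 * ∑ i, X i ^ 2 ≤ sv (M * B) 0 ^ 2 * ∑ i, X i ^ 2 := by
    calc sv (M * A) (n - 1) ^ 2 * ∑ i, X i ^ 2
        ≤ ∑ i, ((M * A).mulVec X i) ^ 2 := aux_low _ _
      _ = ∑ i, ((M * B).mulVec Y i) ^ 2 := by rw [hMAB]
      _ ≤ sv (M * B) 0 ^ 2 * ∑ i, Y i ^ 2 := aux_up _ _
      _ ≤ sv (M * B) 0 ^ 2 * ∑ i, X i ^ 2 := by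
          refine mul_le_mul_of_nonneg_left (Finset.sum_le_sum fun i _ => ?_) (sq_nonneg _)
          have h1 : |x₁ i| - |x₂ i| ≤ |x₁ i - x₂ i| := abs_sub_abs_le_abs_sub _ _
          have h2 : -(|x₁ i - x₂ i|) ≤ |x₁ i| - |x₂ i| := by
            have := abs_sub_abs_le_abs_sub (x₂ i) (x₁ i)
            rw [abs_sub_comm] at this
            linarith
          calc Y i ^ 2 = (|x₁ i| - |x₂ i|) ^ 2 := by simp [hY]
            _ ≤ |x₁ i - x₂ i| ^ 2 := sq_le_sq' h2 h1
            _ = (x₁ i - x₂ i) ^ 2 := sq_abs _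
            _ = X i ^ 2 := by simp [hX]
  have hsq : sv (M * B) 0 ^ 2 < sv (M * A) (n - 1) ^ 2 := by
    have h0 := aux_sv_nonneg (M * B) 0
    nlinarith
  have hsum : ∑ i, X i ^ 2 ≤ 0 := by
    by_contra hpos
    push_neg at hpos
    exact absurd key (not_le.mpr (mul_lt_mul_of_pos_right hsq hpos))
  have hzero : ∀ i, X i = 0 := by
    intro i
    have hs1 : X i ^ 2 ≤ ∑ i, X i ^ 2 :=
      Finset.single_le_sum (f := fun i => X i ^ 2) (fun i _ => sq_nonneg _) (Finset.mem_univ i)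
    have hz : X i ^ 2 = 0 := le_antisymm (hs1.trans hsum) (sq_nonneg _)
    exact pow_eq_zero_iff two_ne_zero |>.mp hz
  funext i
  have h0 : x₁ i - x₂ i = 0 := hzero i
  linarith
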